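/- (Arzelà–Ascoli with GH-converging domains) Let (X_j,d_j) be compact metric spaces converging in the Gromov–Hausdorff sense to a compact metric space (X_∞, d_∞), and let F_j : X_j → [0, F_max] be K-Lipschitz functions for a uniform K > 0. Then a subsequence of the F_j converges to a K-Lipschitz function F_∞ : X_∞ → [0, F_max] in the following sense: there exist a common index set 𝒜 with surjections 𝓘^j : 𝒜 → X_j and 𝓘^∞ : 𝒜 → X_∞ such that sup_{α ∈ 𝒜} |F_j(𝓘^j(α)) − F_∞(𝓘^∞(α))| → 0 and sup_{α,α' ∈ 𝒜} |d_j(𝓘^j(α), 𝓘^j(α')) − d_∞(𝓘^∞(α), 𝓘^∞(α'))| → 0. -/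

import Mathlib

open Filter BoundedContinuousFunction

private lemma clamp_lip (M a b : ℝ) :
    |max 0 (min a M) - max 0 (min b M)| ≤ |a - b| := by
  rw [max_comm 0 (min a M), max_comm 0 (min b M)]
  refine (abs_max_sub_max_le_abs _ _ _).trans ?_
  have := abs_min_sub_min_le_max a M b M
  simpa using this

/-- Arzelà–Ascoli with GH-converging domains: Let `(X j, d j)` be
compact metric spaces converging in the Gromov–Hausdorff sense to a compact metric
space `(X∞, d∞)`, and `F j : X j → [0, Fmax]` be `K`-Lipschitz functions for a uniform
`K > 0`. Then a subsequence of the `F j` converges to a `K`-Lipschitz function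
`F∞ : X∞ → [0, Fmax]`: there exist a common address set `𝒜` with surjections
`𝓘 k : 𝒜 → X (g k)` and `𝓘∞ : 𝒜 → X∞` such that
`sup_α |F (g k) (𝓘 k α) − F∞ (𝓘∞ α)| → 0` and
`sup_{α,α'} |d (𝓘 k α, 𝓘 k α') − d∞(𝓘∞ α, 𝓘∞ α')| → 0`. -/
theorem arzela_ascoli_with_addresses
    (X : ℕ → Type) [∀ j, MetricSpace (X j)] [∀ j, CompactSpace (X j)]
    [∀ j, Nonempty (X j)]
    (Xinf : Type) [MetricSpace Xinf] [CompactSpace Xinf] [Nonempty Xinf]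
    (hGH : Tendsto (fun j => GromovHausdorff.ghDist (X j) Xinf) atTop (nhds 0))
    (K Fmax : ℝ) (hK : 0 < K)
    (F : ∀ j, X j → ℝ)
    (hFrange : ∀ j x, F j x ∈ Set.Icc (0 : ℝ) Fmax)
    (hFlip : ∀ j (x y : X j), |F j x - F j y| ≤ K * dist x y) :
    ∃ g : ℕ → ℕ, StrictMono g ∧
    ∃ Finf : Xinf → ℝ,
      (∀ x, Finf x ∈ Set.Icc (0 : ℝ) Fmax) ∧
      (∀ x y : Xinf, |Finf x - Finf y| ≤ K * dist x y) ∧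
      ∃ (𝒜 : Type) (𝓘 : ∀ k : ℕ, 𝒜 → X (g k)) (𝓘inf : 𝒜 → Xinf),
        (∀ k, Function.Surjective (𝓘 k)) ∧ Function.Surjective 𝓘inf ∧
        (∀ ε > (0 : ℝ), ∃ N : ℕ, ∀ k ≥ N, ∀ α : 𝒜,
          |F (g k) (𝓘 k α) - Finf (𝓘inf α)| ≤ ε) ∧
        (∀ ε > (0 : ℝ), ∃ N : ℕ, ∀ k ≥ N, ∀ α α' : 𝒜,
          |dist (𝓘 k α) (𝓘 k α') - dist (𝓘inf α) (𝓘inf α')| ≤ ε) := by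
  classical
  have hFmax : (0 : ℝ) ≤ Fmax := by
    have := hFrange 0 (Classical.arbitrary _)
    exact this.1.trans this.2
  -- optimal couplings
  choose Φ Ψ Φisom Ψisom hΦΨ using fun j =>
    GromovHausdorff.ghDist_eq_hausdorffDist (X j) Xinf
  set e : ℕ → ℝ := fun j => GromovHausdorff.ghDist (X j) Xinf with he
  set δ : ℕ → ℝ := fun j => e j + 1 / (j + 1) with hδdef
  have hδpos : ∀ j : ℕ, 0 < 1 / ((j : ℝ) + 1) := fun j => by positivity
  have henonneg : ∀ j, 0 ≤ e j := fun j => by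
    rw [he]; dsimp only; rw [hΦΨ j]; exact Metric.hausdorffDist_nonneg
  have hδnonneg : ∀ j, 0 ≤ δ j := fun j => by
    have := hδpos j; have := henonneg j; simp only [hδdef]; linarith
  have hδtendsto : Tendsto δ atTop (nhds 0) := by
    have h2 := tendsto_one_div_add_atTop_nhds_zero_nat (𝕜 := ℝ)
    simpa [hδdef, one_div] using hGH.add h2
  have hlt : ∀ j, Metric.hausdorffDist (Set.range (Φ j)) (Set.range (Ψ j)) < δ j := by
    intro j
    rw [← hΦΨ j]
    have := hδpos j
    simp only [hδdef]; change e j < e j + 1 / (↑j + 1); linarith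
  have hfin : ∀ j, EMetric.hausdorffEdist (Set.range (Φ j)) (Set.range (Ψ j)) ≠ ⊤ := by
    intro j
    exact Metric.hausdorffEdist_ne_top_of_nonempty_of_bounded
      (Set.range_nonempty _) (Set.range_nonempty _)
      (isCompact_range (Φisom j).continuous).isBounded
      (isCompact_range (Ψisom j).continuous).isBounded
  have hfwd : ∀ j (x : X j), ∃ y : Xinf, dist (Φ j x) (Ψ j y) < δ j := by
    intro j x
    obtain ⟨b, hb, hd⟩ := Metric.exists_dist_lt_of_hausdorffDist_lt
      (Set.mem_range_self x) (hlt j) (hfin j)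
    obtain ⟨y, rfl⟩ := hb
    exact ⟨y, hd⟩
  have hbwd : ∀ j (y : Xinf), ∃ x : X j, dist (Φ j x) (Ψ j y) < δ j := by
    intro j y
    obtain ⟨b, hb, hd⟩ := Metric.exists_dist_lt_of_hausdorffDist_lt'
      (Set.mem_range_self y) (hlt j) (hfin j)
    obtain ⟨x, rfl⟩ := hb
    exact ⟨x, hd⟩
  -- transported functions
  set H : ∀ j, Xinf → ℝ := fun j y => ⨅ x : X j, (F j x + K * dist (Φ j x) (Ψ j y)) with hHdef
  have hbdd : ∀ j y, BddBelow (Set.range fun x : X j => F j x + K * dist (Φ j x) (Ψ j y)) := by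
    intro j y
    refine ⟨0, ?_⟩
    rintro _ ⟨x, rfl⟩
    have h1 := (hFrange j x).1
    have h2 : 0 ≤ K * dist (Φ j x) (Ψ j y) := by positivity
    dsimp only
    linarith
  have Hle : ∀ j y (x : X j), H j y ≤ F j x + K * dist (Φ j x) (Ψ j y) :=
    fun j y x => ciInf_le (hbdd j y) x
  have Hge : ∀ j y (x : X j), F j x - K * dist (Φ j x) (Ψ j y) ≤ H j y := by
    intro j y x
    refine le_ciInf fun x' => ?_
    have h1 := (abs_le.1 (hFlip j x x')).2
    have h2 : dist x x' = dist (Φ j x) (Φ j x') := ((Φisom j).dist_eq x x').symm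
    have h3 : dist (Φ j x) (Φ j x') ≤ dist (Φ j x) (Ψ j y) + dist (Ψ j y) (Φ j x') :=
      dist_triangle _ _ _
    have h4 : dist (Ψ j y) (Φ j x') = dist (Φ j x') (Ψ j y) := dist_comm _ _
    have h5 : K * dist x x' ≤ K * (dist (Φ j x) (Ψ j y) + dist (Φ j x') (Ψ j y)) := by
      rw [h2]
      exact mul_le_mul_of_nonneg_left (by linarith) hK.le
    linarith
  have Hlip1 : ∀ j (y y' : Xinf), H j y ≤ H j y' + K * dist y y' := by
    intro j y y'
    rw [← sub_le_iff_le_add]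
    refine le_ciInf fun x => ?_
    rw [sub_le_iff_le_add]
    have h1 := Hle j y x
    have h3 : dist (Φ j x) (Ψ j y) ≤ dist (Φ j x) (Ψ j y') + dist (Ψ j y') (Ψ j y) :=
      dist_triangle _ _ _
    have h4 : dist (Ψ j y') (Ψ j y) = dist y y' := by
      rw [(Ψisom j).dist_eq, dist_comm]
    have h5 : K * dist (Φ j x) (Ψ j y) ≤ K * (dist (Φ j x) (Ψ j y') + dist y y') := by
      refine mul_le_mul_of_nonneg_left ?_ hK.le
      linarith
    linarith
  have Habs : ∀ j (y : Xinf) (x : X j), |H j y - F j x| ≤ K * dist (Φ j x) (Ψ j y) := by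
    intro j y x
    rw [abs_sub_le_iff]
    constructor
    · have := Hle j y x; linarith
    · have := Hge j y x; linarith
  have Hlip : ∀ j (y y' : Xinf), |H j y - H j y'| ≤ K * dist y y' := by
    intro j y y'
    rw [abs_sub_le_iff]
    constructor
    · have := Hlip1 j y y'; linarith
    · have := Hlip1 j y' y; rw [dist_comm y' y] at this; linarith
  -- clamped functions
  set G : ∀ j, Xinf → ℝ := fun j y => max 0 (min (H j y) Fmax) with hGdef
  have hGmem : ∀ j y, G j y ∈ Set.Icc (0 : ℝ) Fmax := by
    intro j y
    constructor
    · exact le_max_left _ _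
    · exact max_le hFmax (min_le_right _ _)
  have hGlip : ∀ j (y y' : Xinf), |G j y - G j y'| ≤ K * dist y y' :=
    fun j y y' => (clamp_lip Fmax _ _).trans (Hlip j y y')
  have hGF : ∀ j (y : Xinf) (x : X j), |G j y - F j x| ≤ K * dist (Φ j x) (Ψ j y) := by
    intro j y x
    have hx : max 0 (min (F j x) Fmax) = F j x := by
      rw [min_eq_left (hFrange j x).2, max_eq_right (hFrange j x).1]
    calc |G j y - F j x| = |max 0 (min (H j y) Fmax) - max 0 (min (F j x) Fmax)| := by
          rw [hx]
      _ ≤ |H j y - F j x| := clamp_lip Fmax _ _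
      _ ≤ K * dist (Φ j x) (Ψ j y) := Habs j y x
  have hGcont : ∀ j, Continuous (G j) := by
    intro j
    refine (LipschitzWith.of_dist_le_mul (K := ⟨K, hK.le⟩) (f := G j) ?_).continuous
    intro y y'
    rw [Real.dist_eq]
    exact hGlip j y y'
  set u : ℕ → (Xinf →ᵇ ℝ) := fun j =>
    BoundedContinuousFunction.mkOfCompact ⟨G j, hGcont j⟩ with hudef
  have hucoe : ∀ j y, u j y = G j y := fun j y => rfl
  -- Arzelà–Ascoli
  set A : Set (Xinf →ᵇ ℝ) :=
    {f | (∀ x y : Xinf, dist (f x) (f y) ≤ K * dist x y) ∧ ∀ x, f x ∈ Set.Icc (0 : ℝ) Fmax}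
    with hAdef
  have hAclosed : IsClosed A := by
    have : A = (⋂ (x : Xinf) (y : Xinf),
        {f : Xinf →ᵇ ℝ | dist (f x) (f y) ≤ K * dist x y}) ∩
        ⋂ (x : Xinf), (fun f : Xinf →ᵇ ℝ => f x) ⁻¹' Set.Icc (0 : ℝ) Fmax := by
      ext f
      simp only [hAdef, Set.mem_setOf_eq, Set.mem_inter_iff, Set.mem_iInter,
        Set.mem_preimage]
    rw [this]
    refine IsClosed.inter ?_ ?_
    · refine isClosed_iInter fun x => isClosed_iInter fun y => ?_
      exact isClosed_le
        (Continuous.dist (continuous_eval_const _)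
          (continuous_eval_const _)) continuous_const
    · exact isClosed_iInter fun x =>
        IsClosed.preimage (continuous_eval_const _) isClosed_Icc
  have hequi : Equicontinuous ((↑) : A → Xinf → ℝ) := by
    intro x₀
    rw [Metric.equicontinuousAt_iff]
    intro ε hε
    refine ⟨ε / (2 * K), by positivity, fun x hx f => ?_⟩
    have h1 := f.2.1 x₀ x
    have h2 : K * dist x₀ x ≤ K * (ε / (2 * K)) := by
      refine mul_le_mul_of_nonneg_left ?_ hK.le
      rw [dist_comm x₀ x]; linarith
    have h3 : K * (ε / (2 * K)) = ε / 2 := by field_simp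
    calc dist (f.1 x₀) (f.1 x) ≤ K * dist x₀ x := h1
      _ ≤ ε / 2 := by rw [← h3]; exact h2
      _ < ε := by linarith
  have hAcompact : IsCompact A := by
    refine BoundedContinuousFunction.arzela_ascoli₂ (Set.Icc (0 : ℝ) Fmax) isCompact_Icc
      A hAclosed (fun f x hf => hf.2 x) hequi
  have huA : ∀ j, u j ∈ A := by
    intro j
    refine ⟨fun x y => ?_, fun x => hGmem j x⟩
    rw [Real.dist_eq]
    exact hGlip j x y
  obtain ⟨finf, hfinfA, g, hg, hconv⟩ := hAcompact.isSeqCompact huA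
  -- extract quantitative convergence
  have hδg : ∀ ε > (0 : ℝ), ∃ N, ∀ k ≥ N, δ (g k) < ε := by
    intro ε hε
    have : Tendsto (fun k => δ (g k)) atTop (nhds 0) :=
      hδtendsto.comp hg.tendsto_atTop
    rw [Metric.tendsto_atTop] at this
    obtain ⟨N, hN⟩ := this ε hε
    refine ⟨N, fun k hk => ?_⟩
    have := hN k hk
    rw [Real.dist_eq, sub_zero, abs_of_nonneg (hδnonneg _)] at this
    exact this
  have huconv : ∀ ε > (0 : ℝ), ∃ N, ∀ k ≥ N, dist (u (g k)) finf < ε := by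
    intro ε hε
    rw [Metric.tendsto_atTop] at hconv
    obtain ⟨N, hN⟩ := hconv ε hε
    exact ⟨N, fun k hk => hN k hk⟩
  refine ⟨g, hg, (finf : Xinf → ℝ), fun x => hfinfA.2 x, ?_, ?_⟩
  · intro x y
    have := hfinfA.1 x y
    rwa [Real.dist_eq] at this
  -- the address set
  set 𝒜 : Type := {p : Xinf × (∀ k : ℕ, X (g k)) //
    ∀ k, dist (Φ (g k) (p.2 k)) (Ψ (g k) p.1) < δ (g k)} with h𝒜def
  refine ⟨𝒜, fun k p => p.1.2 k, fun p => p.1.1, ?_, ?_, ?_, ?_⟩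
  · -- surjectivity onto X (g k)
    intro k x
    obtain ⟨y, hy⟩ := hfwd (g k) x
    refine ⟨⟨⟨y, Function.update (fun k' => (hbwd (g k') y).choose) k x⟩, ?_⟩, ?_⟩
    · intro k'
      by_cases h : k' = k
      · subst h
        dsimp only
        rw [Function.update_self]
        exact hy
      · dsimp only
        rw [Function.update_of_ne h]
        exact (hbwd (g k') y).choose_spec
    · dsimp only
      rw [Function.update_self]
  · -- surjectivity onto Xinf
    intro y
    exact ⟨⟨⟨y, fun k => (hbwd (g k) y).choose⟩,
      fun k => (hbwd (g k) y).choose_spec⟩, rfl⟩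
  · -- convergence of functions
    intro ε hε
    obtain ⟨N1, hN1⟩ := hδg (ε / (2 * K)) (by positivity)
    obtain ⟨N2, hN2⟩ := huconv (ε / 2) (by linarith)
    refine ⟨max N1 N2, fun k hk α => ?_⟩
    obtain ⟨⟨y, q⟩, hq⟩ := α
    have hd : dist (Φ (g k) (q k)) (Ψ (g k) y) < δ (g k) := hq k
    have h1 : |G (g k) y - F (g k) (q k)| ≤ K * dist (Φ (g k) (q k)) (Ψ (g k) y) :=
      hGF (g k) y (q k)
    have h2 : K * dist (Φ (g k) (q k)) (Ψ (g k) y) ≤ K * δ (g k) :=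
      mul_le_mul_of_nonneg_left hd.le hK.le
    have h3 : K * δ (g k) < K * (ε / (2 * K)) :=
      mul_lt_mul_of_pos_left (hN1 k (le_trans (le_max_left _ _) hk)) hK
    have h3' : K * (ε / (2 * K)) = ε / 2 := by field_simp
    have h4 : |G (g k) y - finf y| ≤ dist (u (g k)) finf := by
      have := BoundedContinuousFunction.dist_coe_le_dist (f := u (g k)) (g := finf) y
      rwa [Real.dist_eq, hucoe] at this
    have h5 : dist (u (g k)) finf < ε / 2 := hN2 k (le_trans (le_max_right _ _) hk)
    have := abs_sub_le (F (g k) (q k)) (G (g k) y) (finf y)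
    rw [abs_sub_comm (F (g k) (q k)) (G (g k) y)] at this
    show |F (g k) (q k) - finf y| ≤ ε
    have hA : |G (g k) y - F (g k) (q k)| ≤ ε / 2 := ((h1.trans h2).trans h3.le).trans h3'.le
    have hB : |G (g k) y - finf y| ≤ ε / 2 := by linarith
    linarith
  · -- convergence of distances
    intro ε hε
    obtain ⟨N, hN⟩ := hδg (ε / 2) (by linarith)
    refine ⟨N, fun k hk α α' => ?_⟩
    obtain ⟨⟨y, q⟩, hq⟩ := α
    obtain ⟨⟨y', q'⟩, hq'⟩ := α'
    have hc1 : dist (Φ (g k) (q k)) (Ψ (g k) y) < δ (g k) := hq k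
    have hc2 : dist (Φ (g k) (q' k)) (Ψ (g k) y') < δ (g k) := hq' k
    have hd1 : dist (Φ (g k) (q k)) (Ψ (g k) y) < ε / 2 := lt_trans hc1 (hN k hk)
    have hd2 : dist (Φ (g k) (q' k)) (Ψ (g k) y') < ε / 2 := lt_trans hc2 (hN k hk)
    have e1 : dist (q k) (q' k) = dist (Φ (g k) (q k)) (Φ (g k) (q' k)) :=
      ((Φisom (g k)).dist_eq _ _).symm
    have e2 : dist y y' = dist (Ψ (g k) y) (Ψ (g k) y') :=
      ((Ψisom (g k)).dist_eq _ _).symm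
    have t1 : dist (Φ (g k) (q k)) (Φ (g k) (q' k)) ≤
        dist (Φ (g k) (q k)) (Ψ (g k) y) + dist (Ψ (g k) y) (Ψ (g k) y') +
        dist (Ψ (g k) y') (Φ (g k) (q' k)) := dist_triangle4 _ _ _ _
    have t2 : dist (Ψ (g k) y) (Ψ (g k) y') ≤
        dist (Ψ (g k) y) (Φ (g k) (q k)) + dist (Φ (g k) (q k)) (Φ (g k) (q' k)) +
        dist (Φ (g k) (q' k)) (Ψ (g k) y') := dist_triangle4 _ _ _ _
    have c1 : dist (Ψ (g k) y') (Φ (g k) (q' k)) = dist (Φ (g k) (q' k)) (Ψ (g k) y') :=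
      dist_comm _ _
    have c2 : dist (Ψ (g k) y) (Φ (g k) (q k)) = dist (Φ (g k) (q k)) (Ψ (g k) y) :=
      dist_comm _ _
    show |dist (q k) (q' k) - dist y y'| ≤ ε
    rw [abs_sub_le_iff]
    constructor
    · rw [e1, e2]; linarith
    · rw [e1, e2]; linarith
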